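/- Let $M$ be a connected polymatroid and let $e$, $f$ be distinct elements of $E(M)$. Let each of $\dagger, \ddagger$ denote a deletion or contraction operation of a single element. Suppose $M\dagger e$ and $M\dagger e\,\ddagger f$ are connected but $M\ddagger f$ is not connected. Then $\{e\}$ is $1$-separating in $M \ddagger f$ (i.e., $\lambda_{M\ddagger f}(\{e\}) = 0$), and consequently $M\ddagger f\backslash e = M\ddagger f/e$. -/

import Mathlib

/-- Connectivity of a polymatroid with rank function `r` and ground set `F`. -/
def Conn {α : Type*} [DecidableEq α] (r : Finset α → ℤ) (F : Finset α) : Prop :=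
  ∀ X ⊆ F, X ≠ ∅ → X ≠ F → r X + r (F \ X) ≠ r F

/-- The rank function after removing `e`: deletion if `b = true`, contraction otherwise. -/
def rmOp {α : Type*} [DecidableEq α] (b : Bool) (r : Finset α → ℤ) (e : α) :
    Finset α → ℤ :=
  if b then r else fun X => r (X ∪ {e}) - r {e}

section Aux

variable {α : Type*} [DecidableEq α]

/-- If the side `A` of a 1-separation of `N` contains `e` and `N†e` is connected,
then `A = {e}`. -/
lemma step_lemma (F : Finset α) (s : Finset α → ℤ)
    (hs0 : s ∅ = 0)
    (hsub : ∀ X Y : Finset α, s (X ∪ Y) + s (X ∩ Y) ≤ s X + s Y)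
    (e : α) (he : e ∈ F) (dag : Bool)
    (h2 : Conn (rmOp dag s e) (F \ {e}))
    (A : Finset α) (hA : A ⊆ F) (heA : e ∈ A) (hAne : A ≠ F)
    (hsep : s A + s (F \ A) = s F) : A = {e} := by
  set B := F \ A with hB
  have heB : e ∉ B := by simp [hB, heA]
  have hBsub : B ⊆ F \ {e} := by
    intro x hx
    simp only [hB, Finset.mem_sdiff, Finset.mem_singleton] at hx ⊢
    exact ⟨hx.1, fun h => hx.2 (h ▸ heA)⟩
  have hBne : B ≠ ∅ := by
    intro h
    apply hAne
    apply Finset.Subset.antisymm hA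
    intro x hx
    by_contra hxA
    have : x ∈ B := Finset.mem_sdiff.mpr ⟨hx, hxA⟩
    simp [h] at this
  have hid1 : (F \ {e}) \ B = A \ {e} := by
    ext x
    simp only [hB, Finset.mem_sdiff, Finset.mem_singleton, not_and, not_not]
    constructor
    · rintro ⟨⟨hxF, hxe⟩, hx2⟩
      exact ⟨hx2 hxF, hxe⟩
    · rintro ⟨hxA, hxe⟩
      exact ⟨⟨hA hxA, hxe⟩, fun _ => hxA⟩
  have hBA : B ∪ A = F := by
    ext x
    simp only [hB, Finset.mem_union, Finset.mem_sdiff]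
    constructor
    · rintro (⟨h, _⟩ | h)
      · exact h
      · exact hA h
    · intro h
      by_cases hx : x ∈ A
      · exact Or.inr hx
      · exact Or.inl ⟨h, hx⟩
  have hBF : B = F \ {e} := by
    by_contra hBneF
    apply h2 B hBsub hBne hBneF
    rw [hid1]
    cases dag with
    | true =>
      simp only [rmOp, if_pos]
      have h1 : s F + s (A \ {e}) ≤ s A + s (F \ {e}) := by
        have := hsub A (F \ {e})
        have hu : A ∪ (F \ {e}) = F := by
          ext x
          simp only [Finset.mem_union, Finset.mem_sdiff, Finset.mem_singleton]
          constructor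
          · rintro (h | ⟨h, _⟩)
            · exact hA h
            · exact h
          · intro h
            by_cases hx : x = e
            · exact Or.inl (hx ▸ heA)
            · exact Or.inr ⟨h, hx⟩
        have hi : A ∩ (F \ {e}) = A \ {e} := by
          ext x
          simp only [Finset.mem_inter, Finset.mem_sdiff, Finset.mem_singleton]
          exact ⟨fun ⟨h1, _, h3⟩ => ⟨h1, h3⟩, fun ⟨h1, h2⟩ => ⟨h1, hA h1, h2⟩⟩
        rw [hu, hi] at this
        linarith
      have h2' : s (F \ {e}) ≤ s B + s (A \ {e}) := by
        have := hsub B (A \ {e})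
        have hu : B ∪ (A \ {e}) = F \ {e} := by
          ext x
          simp only [hB, Finset.mem_union, Finset.mem_sdiff, Finset.mem_singleton]
          constructor
          · rintro (⟨h1, h2⟩ | ⟨h1, h2⟩)
            · exact ⟨h1, fun h => h2 (h ▸ heA)⟩
            · exact ⟨hA h1, h2⟩
          · rintro ⟨h1, h2⟩
            by_cases hx : x ∈ A
            · exact Or.inr ⟨hx, h2⟩
            · exact Or.inl ⟨h1, hx⟩
        have hi : B ∩ (A \ {e}) = ∅ := by
          ext x
          simp only [hB, Finset.mem_inter, Finset.mem_sdiff, Finset.mem_singleton,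
            Finset.notMem_empty, iff_false, not_and]
          tauto
        rw [hu, hi, hs0] at this
        linarith
      linarith
    | false =>
      simp only [rmOp, Bool.false_eq_true, if_false]
      have hAe : A \ {e} ∪ {e} = A := by
        ext x
        simp only [Finset.mem_union, Finset.mem_sdiff, Finset.mem_singleton]
        constructor
        · rintro (⟨h, _⟩ | h)
          · exact h
          · exact h ▸ heA
        · intro h
          by_cases hx : x = e
          · exact Or.inr hx
          · exact Or.inl ⟨h, hx⟩
      have hFe : F \ {e} ∪ {e} = F := by
        ext x
        simp only [Finset.mem_union, Finset.mem_sdiff, Finset.mem_singleton]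
        constructor
        · rintro (⟨h, _⟩ | h)
          · exact h
          · exact h ▸ he
        · intro h
          by_cases hx : x = e
          · exact Or.inr hx
          · exact Or.inl ⟨h, hx⟩
      rw [hAe, hFe]
      have h1 : s (B ∪ {e}) ≤ s B + s {e} := by
        have := hsub B {e}
        have hi : B ∩ {e} = ∅ := by
          ext x
          simp only [Finset.mem_inter, Finset.mem_singleton, Finset.notMem_empty, iff_false,
            not_and]
          intro hx hxe
          exact heB (hxe ▸ hx)
        rw [hi, hs0] at this
        linarith
      have h2' : s F + s {e} ≤ s (B ∪ {e}) + s A := by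
        have := hsub (B ∪ {e}) A
        have hu : (B ∪ {e}) ∪ A = F := by
          rw [Finset.union_right_comm]
          rw [hBA]
          ext x
          simp only [Finset.mem_union, Finset.mem_singleton]
          exact ⟨fun h => h.elim id (fun hx => hx ▸ he), fun h => Or.inl h⟩
        have hi : (B ∪ {e}) ∩ A = {e} := by
          ext x
          simp only [hB, Finset.mem_inter, Finset.mem_union, Finset.mem_sdiff,
            Finset.mem_singleton]
          constructor
          · rintro ⟨(⟨_, h2⟩ | h), h3⟩
            · exact absurd h3 h2
            · exact h
          · intro h
            exact ⟨Or.inr h, h ▸ heA⟩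
        rw [hu, hi] at this
        linarith
      linarith
  -- now A = F \ B = F \ (F \ {e}) = {e}
  have : A = F \ B := by
    ext x
    simp only [hB, Finset.mem_sdiff, not_and, not_not]
    constructor
    · intro h
      exact ⟨hA h, fun _ => h⟩
    · rintro ⟨h1, h2⟩
      exact h2 h1
  rw [this, hBF]
  ext x
  simp only [Finset.mem_sdiff, Finset.mem_singleton, not_and, not_not]
  constructor
  · rintro ⟨h1, h2⟩
    exact h2 h1
  · intro h
    exact ⟨h ▸ he, fun _ => h⟩

/-- If `N†e` is connected but `N` is not, then `{e}` is 1-separating in `N`. -/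
lemma sep_e (F : Finset α) (s : Finset α → ℤ)
    (hs0 : s ∅ = 0)
    (hsub : ∀ X Y : Finset α, s (X ∪ Y) + s (X ∩ Y) ≤ s X + s Y)
    (e : α) (he : e ∈ F) (dag : Bool)
    (h2 : Conn (rmOp dag s e) (F \ {e}))
    (h3 : ¬ Conn s F) : s {e} + s (F \ {e}) = s F := by
  unfold Conn at h3
  push_neg at h3
  obtain ⟨X, hXF, hXne, hXneF, hXsep⟩ := h3
  have hXX : F \ (F \ X) = X := by
    ext x
    simp only [Finset.mem_sdiff, not_and, not_not]
    constructor
    · rintro ⟨h1, h2⟩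
      exact h2 h1
    · intro h
      exact ⟨hXF h, fun _ => h⟩
  by_cases heX : e ∈ X
  · have hA := step_lemma F s hs0 hsub e he dag h2 X hXF heX hXneF hXsep
    rw [hA] at hXsep
    exact hXsep
  · have heA : e ∈ F \ X := Finset.mem_sdiff.mpr ⟨he, heX⟩
    have hAneF : F \ X ≠ F := by
      intro h
      obtain ⟨x, hx⟩ := hXne
      have hxF : x ∈ F := hXF hx
      rw [← h] at hxF
      exact (Finset.mem_sdiff.mp hxF).2 hx
    have hsep' : s (F \ X) + s (F \ (F \ X)) = s F := by
      rw [hXX]; linarith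
    have hA := step_lemma F s hs0 hsub e he dag h2 (F \ X) (Finset.sdiff_subset) heA hAneF hsep'
    rw [hA] at hsep'
    exact hsep'

/-- From `λ({e}) = 0` conclude `N\e = N/e`. -/
lemma del_eq_con (F : Finset α) (s : Finset α → ℤ)
    (hs0 : s ∅ = 0)
    (hsub : ∀ X Y : Finset α, s (X ∪ Y) + s (X ∩ Y) ≤ s X + s Y)
    (e : α) (he : e ∈ F)
    (hsep : s {e} + s (F \ {e}) = s F)
    (X : Finset α) (hX : X ⊆ F \ {e}) : s X = s (X ∪ {e}) - s {e} := by
  have heX : e ∉ X := fun h => by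
    have := hX h
    simp at this
  have h1 : s (X ∪ {e}) ≤ s X + s {e} := by
    have := hsub X {e}
    have hi : X ∩ {e} = ∅ := by
      ext x
      simp only [Finset.mem_inter, Finset.mem_singleton, Finset.notMem_empty, iff_false, not_and]
      intro hx hxe
      exact heX (hxe ▸ hx)
    rw [hi, hs0] at this
    linarith
  have h2 : s F + s X ≤ s (X ∪ {e}) + s (F \ {e}) := by
    have := hsub (X ∪ {e}) (F \ {e})
    have hu : (X ∪ {e}) ∪ (F \ {e}) = F := by
      ext x
      simp only [Finset.mem_union, Finset.mem_sdiff, Finset.mem_singleton]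
      constructor
      · rintro ((h | h) | ⟨h, _⟩)
        · exact (Finset.mem_sdiff.mp (hX h)).1
        · exact h ▸ he
        · exact h
      · intro h
        by_cases hx : x = e
        · exact Or.inl (Or.inr hx)
        · exact Or.inr ⟨h, hx⟩
    have hi : (X ∪ {e}) ∩ (F \ {e}) = X := by
      ext x
      simp only [Finset.mem_inter, Finset.mem_union, Finset.mem_sdiff, Finset.mem_singleton]
      constructor
      · rintro ⟨(h | h), _, h3⟩
        · exact h
        · exact absurd h h3
      · intro h
        have hh := Finset.mem_sdiff.mp (hX h)
        simp only [Finset.mem_singleton] at hh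
        exact ⟨Or.inl h, hh.1, hh.2⟩
    rw [hu, hi] at this
    linarith
  linarith

end Aux

/-- If `M†e` and `M†e‡f` are connected but `M‡f` is not, then `{e}` is 1-separating in
`M‡f` and `M‡f\e = M‡f/e`. -/
theorem daggy {α : Type*} [DecidableEq α]
    (E : Finset α) (r : Finset α → ℤ)
    (hr0 : r ∅ = 0)
    (hmono : ∀ X Y : Finset α, X ⊆ Y → r X ≤ r Y)
    (hsub : ∀ X Y : Finset α, r (X ∪ Y) + r (X ∩ Y) ≤ r X + r Y)
    (hconn : Conn r E)
    (e f : α) (he : e ∈ E) (hf : f ∈ E) (hef : e ≠ f)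
    (dag ddag : Bool)
    (h1 : Conn (rmOp dag r e) (E \ {e}))
    (h2 : Conn (rmOp ddag (rmOp dag r e) f) ((E \ {e}) \ {f}))
    (h3 : ¬ Conn (rmOp ddag r f) (E \ {f})) :
    (rmOp ddag r f {e} + rmOp ddag r f ((E \ {f}) \ {e}) = rmOp ddag r f (E \ {f})) ∧
    (∀ X ⊆ (E \ {f}) \ {e},
      rmOp ddag r f X = rmOp ddag r f (X ∪ {e}) - rmOp ddag r f {e}) := by
  set s := rmOp ddag r f with hs
  have hs0 : s ∅ = 0 := by
    cases ddag <;> simp [hs, rmOp, hr0]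
  have hssub : ∀ X Y : Finset α, s (X ∪ Y) + s (X ∩ Y) ≤ s X + s Y := by
    cases ddag with
    | true => intro X Y; simpa [hs, rmOp] using hsub X Y
    | false =>
      intro X Y
      simp only [hs, rmOp, if_neg]
      have := hsub (X ∪ {f}) (Y ∪ {f})
      have hu : (X ∪ {f}) ∪ (Y ∪ {f}) = (X ∪ Y) ∪ {f} := by
        ext x; simp only [Finset.mem_union, Finset.mem_singleton]; tauto
      have hi : (X ∪ {f}) ∩ (Y ∪ {f}) = (X ∩ Y) ∪ {f} := by
        ext x
        simp only [Finset.mem_inter, Finset.mem_union, Finset.mem_singleton]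
        tauto
      rw [hu, hi] at this
      simp only [Bool.false_eq_true, if_false]
      linarith
  have hcomm : rmOp dag s e = rmOp ddag (rmOp dag r e) f := by
    funext X
    cases dag <;> cases ddag <;>
      simp only [hs, rmOp, if_pos, if_neg, Bool.false_eq_true, if_false, if_true]
    · -- dag = false, ddag = false
      have h1' : X ∪ {f} ∪ {e} = X ∪ {e} ∪ {f} := by
        ext x; simp only [Finset.mem_union, Finset.mem_singleton]; tauto
      have h2' : ({f} : Finset α) ∪ {e} = {e} ∪ {f} := by
        ext x; simp only [Finset.mem_union, Finset.mem_singleton]; tauto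
      rw [h1', h2']
      ring
  have he' : e ∈ E \ {f} := Finset.mem_sdiff.mpr ⟨he, by simpa using hef⟩
  have hground : (E \ {e}) \ {f} = (E \ {f}) \ {e} := by
    ext x; simp only [Finset.mem_sdiff, Finset.mem_singleton]; tauto
  have h2' : Conn (rmOp dag s e) ((E \ {f}) \ {e}) := by
    rw [hcomm, ← hground]
    exact h2
  have hfirst := sep_e (E \ {f}) s hs0 hssub e he' dag h2' h3
  refine ⟨hfirst, ?_⟩
  intro X hX
  exact del_eq_con (E \ {f}) s hs0 hssub e he' hfirst X hX
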